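/- Let V=(Q,Δ,w) be a 1-VASS (without tests) and s ∈ Q. The configuration (s,0) is unbounded if and only if there exist a simple path π from s to some state q and a positive-weight simple cycle γ on q such that the concatenated path π·γ lifts to a run from (s,0); in particular, π and γ each have length at most |Q|. -/

import Mathlib

namespace VASSPaper

/-- A 1-VASS (without tests): states `Q`, transition relation `delta`, integer weights `w`. -/
structure VASS (Q : Type) where
  delta : Q → Q → Prop
  w : Q → Q → ℤ

variable {Q : Type}

/-- A path is a nonempty sequence of states joined by transitions. -/
def IsPath (V : VASS Q) : List Q → Prop
  | [] => False
  | [_] => True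
  | a :: b :: l => V.delta a b ∧ IsPath V (b :: l)

/-- The weight of a path: the sum of the weights of its transitions. -/
def pathWeight (V : VASS Q) (π : List Q) : ℤ :=
  (List.zipWith V.w π π.tail).sum

/-- The counter value at position `i` of the run over `π` starting with counter `z`. -/
def counterAt (V : VASS Q) (z : ℕ) (π : List Q) (i : ℕ) : ℤ :=
  (z : ℤ) + pathWeight V (π.take (i + 1))

/-- `π` lifts to a run from counter value `z`: all counter values stay nonnegative. -/
def IsRun (V : VASS Q) (π : List Q) (z : ℕ) : Prop :=
  IsPath V π ∧ ∀ i, i < π.length → 0 ≤ counterAt V z π i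

/-- `π` goes from configuration `c` to configuration `c'`. -/
def RunFromTo (V : VASS Q) (π : List Q) (c c' : Q × ℕ) : Prop :=
  π.head? = some c.1 ∧ π.getLast? = some c'.1 ∧ (c'.2 : ℤ) = (c.2 : ℤ) + pathWeight V π

/-- `c'` is reachable from `c` (in a 1-VASS without tests every run is valid). -/
def Reaches (V : VASS Q) (c c' : Q × ℕ) : Prop :=
  ∃ π, IsRun V π c.2 ∧ RunFromTo V π c c'

/-- A configuration is unbounded if infinitely many configurations are reachable from it. -/
def Unbounded (V : VASS Q) (c : Q × ℕ) : Prop :=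
  {c' | Reaches V c c'}.Infinite

/-- The minimum weight of a (possibly empty) prefix of `π`. -/
def pmin (V : VASS Q) (π : List Q) : ℤ :=
  ((List.range (π.length + 1)).map fun i => pathWeight V (π.take i)).foldr min 0

/-- The maximum weight of a (possibly empty) suffix of `π`. -/
def smax (V : VASS Q) (π : List Q) : ℤ :=
  ((List.range (π.length + 1)).map fun i => pathWeight V (π.drop i)).foldr max 0

/-- A cycle on `q`: a path with at least one transition starting and ending at `q`. -/
def IsCycleOn (V : VASS Q) (π : List Q) (q : Q) : Prop :=
  IsPath V π ∧ 2 ≤ π.length ∧ π.head? = some q ∧ π.getLast? = some q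

/-- A simple cycle on `q`. -/
def IsSimpleCycleOn (V : VASS Q) (π : List Q) (q : Q) : Prop :=
  IsCycleOn V π q ∧ π.dropLast.Nodup

/-- `π` is dominated by `π'` (paths with the same first and last states). -/
def Dominated (V : VASS Q) (π π' : List Q) : Prop :=
  π.head? = π'.head? ∧ π.getLast? = π'.getLast? ∧
    pmin V π ≤ pmin V π' ∧ smax V π ≤ smax V π'

/-- `π` is a path from `p` to `q`. -/
def IsPQPath (V : VASS Q) (p q : Q) (π : List Q) : Prop :=
  IsPath V π ∧ π.head? = some p ∧ π.getLast? = some q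

/-- `P'` is a Pareto set for `P`: every path of `P` is dominated by some path of `P'`. -/
def ParetoFor (V : VASS Q) (P' P : Set (List Q)) : Prop :=
  ∀ π ∈ P, ∃ π' ∈ P', Dominated V π π'

/-- Concatenation of a `p`-`q` path and a `q`-`r` path, identifying the shared state. -/
def pathConcat (π π' : List Q) : List Q := π ++ π'.tail
-- ==================== helpers ====================

variable (V : VASS Q)

@[simp] lemma pathWeight_nil : pathWeight V ([] : List Q) = 0 := rfl

@[simp] lemma pathWeight_singleton (a : Q) : pathWeight V [a] = 0 := rfl

@[simp] lemma pathWeight_cons_cons (a b : Q) (l : List Q) :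
    pathWeight V (a :: b :: l) = V.w a b + pathWeight V (b :: l) := by
  simp [pathWeight]

/-- Recursive characterization of runnability from an integer counter value. -/
def RunAux (V : VASS Q) : ℤ → List Q → Prop
  | _, [] => True
  | z, [_] => 0 ≤ z
  | z, a :: b :: l => 0 ≤ z ∧ V.delta a b ∧ RunAux V (z + V.w a b) (b :: l)

@[simp] lemma runAux_nil (z : ℤ) : RunAux V z ([] : List Q) := trivial

@[simp] lemma runAux_singleton (z : ℤ) (a : Q) : RunAux V z [a] ↔ 0 ≤ z := Iff.rfl

@[simp] lemma runAux_cons_cons (z : ℤ) (a b : Q) (l : List Q) :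
    RunAux V z (a :: b :: l) ↔ 0 ≤ z ∧ V.delta a b ∧ RunAux V (z + V.w a b) (b :: l) := Iff.rfl

lemma RunAux.nonneg {z : ℤ} {l : List Q} (hl : l ≠ []) (h : RunAux V z l) : 0 ≤ z := by
  match l with
  | [] => exact absurd rfl hl
  | [a] => exact h
  | a :: b :: t => exact h.1

lemma RunAux.mono : ∀ (l : List Q) {z z' : ℤ}, z ≤ z' → RunAux V z l → RunAux V z' l
  | [], _, _, _, _ => trivial
  | [a], z, z', hzz, h => le_trans h hzz
  | a :: b :: t, z, z', hzz, h =>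
    ⟨le_trans h.1 hzz, h.2.1, RunAux.mono (b :: t) (by linarith) h.2.2⟩

lemma RunAux.weight_nonneg : ∀ (l : List Q) {z : ℤ}, l ≠ [] → RunAux V z l →
    0 ≤ z + pathWeight V l
  | [], _, hl, _ => absurd rfl hl
  | [a], z, _, h => by simpa using h
  | a :: b :: t, z, _, h => by
    have := RunAux.weight_nonneg (b :: t) (by simp) h.2.2
    simp only [pathWeight_cons_cons]
    linarith

lemma RunAux.isPath : ∀ (l : List Q) {z : ℤ}, l ≠ [] → RunAux V z l → IsPath V l
  | [], _, hl, _ => absurd rfl hl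
  | [a], _, _, _ => trivial
  | a :: b :: t, z, _, h => ⟨h.2.1, RunAux.isPath (b :: t) (by simp) h.2.2⟩

lemma RunAux.take : ∀ (l : List Q) (m : ℕ) {z : ℤ}, RunAux V z l → RunAux V z (l.take m)
  | [], m, _, _ => by simp
  | _ :: _, 0, _, _ => by simp
  | [a], m + 1, z, h => by simpa using h
  | a :: b :: t, 1, z, h => h.1
  | a :: b :: t, m + 2, z, h => by
    have := RunAux.take (b :: t) (m + 1) h.2.2
    exact ⟨h.1, h.2.1, by simpa using this⟩

lemma RunAux.drop : ∀ (m : ℕ) (l : List Q) {z : ℤ}, RunAux V z l →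
    RunAux V (z + pathWeight V (l.take (m + 1))) (l.drop m)
  | 0, [], z, h => by simp
  | 0, a :: t, z, h => by simpa using h
  | m + 1, [], z, h => by simp
  | m + 1, [a], z, h => by simp
  | m + 1, a :: b :: t, z, h => by
    have h2 := RunAux.drop m (b :: t) h.2.2
    rw [List.take_succ_cons] at h2
    simp only [List.drop_succ_cons, List.take_succ_cons, pathWeight_cons_cons]
    have e : z + (V.w a b + pathWeight V (b :: List.take m t)) =
        z + V.w a b + pathWeight V (b :: List.take m t) := by ring
    rw [e]
    exact h2

lemma pathWeight_concat : ∀ (σ : List Q) {τ : List Q} {q : Q},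
    σ.getLast? = some q → τ.head? = some q →
    pathWeight V (σ ++ τ.tail) = pathWeight V σ + pathWeight V τ
  | [], τ, q, hσ, hτ => by simp at hσ
  | [a], τ, q, hσ, hτ => by
    match τ, hτ with
    | b :: t, hτ => 
      simp only [List.getLast?_singleton, Option.some.injEq] at hσ
      simp only [List.head?_cons, Option.some.injEq] at hτ
      subst hσ; subst hτ
      simp
  | a :: c :: l, τ, q, hσ, hτ => by
    have hσ' : (c :: l).getLast? = some q := by
      rw [← hσ]; simp [List.getLast?_cons_cons]
    have := pathWeight_concat (c :: l) hσ' hτ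
    simp only [List.cons_append, pathWeight_cons_cons] at *
    rw [this]; ring

lemma runAux_append_tail_iff : ∀ (σ : List Q) {τ : List Q} {q : Q} (z : ℤ),
    σ.getLast? = some q → τ.head? = some q →
    (RunAux V z (σ ++ τ.tail) ↔ RunAux V z σ ∧ RunAux V (z + pathWeight V σ) τ)
  | [], τ, q, z, hσ, hτ => by simp at hσ
  | [a], τ, q, z, hσ, hτ => by
    match τ, hτ with
    | b :: t, hτ =>
      simp only [List.getLast?_singleton, Option.some.injEq] at hσ
      simp only [List.head?_cons, Option.some.injEq] at hτ
      subst hσ; subst hτ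
      simp only [List.tail_cons, List.singleton_append, pathWeight_singleton, add_zero,
        runAux_singleton]
      constructor
      · intro h
        exact ⟨RunAux.nonneg V (by simp) h, h⟩
      · intro h; exact h.2
  | a :: c :: l, τ, q, z, hσ, hτ => by
    have hσ' : (c :: l).getLast? = some q := by
      rw [← hσ]; simp [List.getLast?_cons_cons]
    have IH := runAux_append_tail_iff (c :: l) (z + V.w a c) hσ' hτ
    simp only [List.cons_append, runAux_cons_cons, pathWeight_cons_cons] at *
    rw [IH]
    have e : z + (V.w a c + pathWeight V (c :: l)) = z + V.w a c + pathWeight V (c :: l) := by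
      ring
    constructor
    · rintro ⟨h0, hd, h1, h2⟩
      exact ⟨⟨h0, hd, h1⟩, by rwa [← e] at h2⟩
    · rintro ⟨⟨h0, hd, h1⟩, h2⟩
      exact ⟨h0, hd, h1, by rwa [e] at h2⟩

lemma isRun_iff (l : List Q) (z : ℕ) : IsRun V l z ↔ l ≠ [] ∧ RunAux V (z : ℤ) l := by
  have key : ∀ (l : List Q) (z : ℤ),
      ((IsPath V l ∧ ∀ i, i < l.length → 0 ≤ z + pathWeight V (l.take (i + 1))) ↔
        (l ≠ [] ∧ RunAux V z l)) := by
    intro l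
    induction l with
    | nil => intro z; simp [IsPath]
    | cons a rest IH =>
      intro z
      match rest with
      | [] =>
        simp only [IsPath, true_and, ne_eq, reduceCtorEq, not_false_eq_true,
          runAux_singleton, List.length_singleton]
        constructor
        · intro h
          have := h 0 (by simp)
          simpa using this
        · intro h i hi
          interval_cases i
          simpa using h
      | c :: t =>
        have IH' := IH (z + V.w a c)
        constructor
        · rintro ⟨⟨hd, hp⟩, hc⟩
          refine ⟨by simp, ?_⟩
          have h0 : 0 ≤ z := by simpa using hc 0 (by simp)
          refine ⟨h0, hd, ?_⟩
          refine (IH' ).mp ⟨hp, ?_⟩ |>.2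
          intro j hj
          have := hc (j + 1) (by simpa using Nat.succ_lt_succ hj)
          simp only [List.take_succ_cons, pathWeight_cons_cons] at this ⊢
          linarith
        · rintro ⟨-, h0, hd, hr⟩
          have := (IH').mpr ⟨by simp, hr⟩
          refine ⟨⟨hd, this.1⟩, ?_⟩
          intro i hi
          match i with
          | 0 => simpa using h0
          | j + 1 =>
            have := this.2 j (by simpa using Nat.lt_of_succ_lt_succ hi)
            simp only [List.take_succ_cons, pathWeight_cons_cons] at this ⊢
            linarith
  unfold IsRun counterAt
  exact key l (z : ℤ)

lemma pathWeight_le : ∀ (l : List Q) {W : ℤ}, 0 ≤ W → (∀ a b : Q, V.w a b ≤ W) →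
    pathWeight V l ≤ ((l.length - 1 : ℕ) : ℤ) * W
  | [], W, hW, hb => by simp
  | [a], W, hW, hb => by simp
  | a :: c :: t, W, hW, hb => by
    have := pathWeight_le (c :: t) hW hb
    simp only [pathWeight_cons_cons, List.length_cons] at *
    have e1 : ((t.length + 1 + 1 - 1 : ℕ) : ℤ) = ((t.length + 1 - 1 : ℕ) : ℤ) + 1 := by
      push_cast [Nat.add_sub_cancel]; ring
    rw [e1]
    have := hb a c
    nlinarith

lemma getLast?_take {l : List Q} {i : ℕ} (h : i < l.length) :
    (l.take (i + 1)).getLast? = some l[i] := by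
  rw [List.take_succ, List.getElem?_eq_getElem h]
  simp only [Option.toList, List.getLast?_append]
  simp

lemma head?_take (l : List Q) (n : ℕ) : (l.take (n + 1)).head? = l.head? := by
  cases l <;> simp

lemma getLast?_drop {l : List Q} {a : ℕ} (h : a < l.length) :
    (l.drop a).getLast? = l.getLast? := by
  conv_rhs => rw [← List.take_append_drop a l]
  rw [List.getLast?_append]
  have : l.drop a ≠ [] := by
    simp [List.drop_eq_nil_iff]
    omega
  cases hd : (l.drop a).getLast? with
  | none => exact absurd (List.getLast?_eq_none_iff.mp hd) this
  | some x => simp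

/-- Iterated concatenation: `π` followed by `k` copies of `t`. -/
def iterCat (π t : List Q) : ℕ → List Q
  | 0 => π
  | k + 1 => iterCat π t k ++ t

lemma lasso_unbounded {V : VASS Q} {s q : Q} {π γ : List Q}
    (hπh : π.head? = some s) (hπl : π.getLast? = some q)
    (hγc : IsCycleOn V γ q) (hpos : 0 < pathWeight V γ)
    (hrun : IsRun V (pathConcat π γ) 0) : Unbounded V (s, 0) := by
  obtain ⟨hγpath, hγlen, hγh, hγl⟩ := hγc
  have hπne : π ≠ [] := by intro h; rw [h] at hπh; simp at hπh
  have hrun' : RunAux V 0 (π ++ γ.tail) := ((isRun_iff V _ 0).mp hrun).2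
  obtain ⟨hπrun, hγrun⟩ := (runAux_append_tail_iff V π 0 hπl hγh).mp hrun'
  set v := pathWeight V π with hv
  set d := pathWeight V γ with hd
  have hv0 : 0 ≤ v := by
    have := RunAux.weight_nonneg V π hπne hπrun
    simpa using this
  have hγtne : γ.tail ≠ [] := by
    intro h
    have : γ.length ≤ 1 := by
      cases γ with
      | nil => simp
      | cons x t => simp at h; simp [h]
    omega
  have hγtl : γ.tail.getLast? = some q := by
    rw [← List.drop_one]
    rw [getLast?_drop (by omega)]
    exact hγl
  have main : ∀ k : ℕ, RunAux V 0 (iterCat π γ.tail k) ∧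
      (iterCat π γ.tail k).head? = some s ∧
      (iterCat π γ.tail k).getLast? = some q ∧
      pathWeight V (iterCat π γ.tail k) = v + k * d := by
    intro k
    induction k with
    | zero => exact ⟨hπrun, hπh, hπl, by simp [iterCat, hv]⟩
    | succ k IH =>
      obtain ⟨h1, h2, h3, h4⟩ := IH
      have hγk : RunAux V (0 + pathWeight V (iterCat π γ.tail k)) γ := by
        refine RunAux.mono V γ ?_ hγrun
        rw [h4]
        nlinarith
      refine ⟨(runAux_append_tail_iff V _ 0 h3 hγh).mpr ⟨h1, hγk⟩, ?_, ?_, ?_⟩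
      · show (iterCat π γ.tail k ++ γ.tail).head? = some s
        rw [List.head?_append, h2]; rfl
      · show (iterCat π γ.tail k ++ γ.tail).getLast? = some q
        rw [List.getLast?_append, hγtl]; rfl
      · show pathWeight V (iterCat π γ.tail k ++ γ.tail) = v + (k + 1 : ℕ) * d
        rw [pathWeight_concat V _ h3 hγh, h4]
        push_cast; ring
  have hne : ∀ k, iterCat π γ.tail k ≠ [] := by
    intro k h
    have := (main k).2.1
    rw [h] at this; simp at this
  refine Set.infinite_of_injective_forall_mem
    (f := fun k : ℕ => ((q, (v + k * d).toNat) : Q × ℕ)) ?_ ?_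
  · intro k k' hkk
    simp only [Prod.mk.injEq, true_and] at hkk
    have e1 : (0:ℤ) ≤ v + k * d := by positivity
    have e2 : (0:ℤ) ≤ v + k' * d := by positivity
    have : (v + k * d) = (v + k' * d) := by
      have := congrArg (fun n : ℕ => (n : ℤ)) hkk
      simpa [Int.toNat_of_nonneg e1, Int.toNat_of_nonneg e2] using this
    have : (k : ℤ) * d = k' * d := by linarith
    have : (k : ℤ) = k' := by
      exact mul_right_cancel₀ (by omega) this
    exact_mod_cast this
  · intro k
    obtain ⟨h1, h2, h3, h4⟩ := main k
    refine ⟨iterCat π γ.tail k, (isRun_iff V _ 0).mpr ⟨hne k, h1⟩, h2, h3, ?_⟩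
    simp only
    rw [h4, Int.toNat_of_nonneg (by positivity)]
    ring


/-- in a 1-VASS without tests, `(s,0)` is unbounded iff some lasso (a simple path
followed by a positive-weight simple cycle, each of length at most `|Q|`) lifts to a run
from `(s,0)`. -/
theorem unbounded_iff_lasso
    {Q : Type} [Fintype Q] (V : VASS Q) (s : Q) :
    Unbounded V (s, 0) ↔
      ∃ (q : Q) (π γc : List Q),
        IsPath V π ∧ π.Nodup ∧ π.head? = some s ∧ π.getLast? = some q ∧
        IsSimpleCycleOn V γc q ∧ 0 < pathWeight V γc ∧
        IsRun V (pathConcat π γc) 0 ∧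
        π.length ≤ Fintype.card Q + 1 ∧ γc.length ≤ Fintype.card Q + 1 := by
  constructor
  · intro hU
    classical
    set Wn : ℕ := Finset.univ.sup (fun p : Q × Q => (V.w p.1 p.2).toNat) with hWn
    set W : ℤ := (Wn : ℤ) with hWdef
    have hW0 : (0:ℤ) ≤ W := by positivity
    have hWb : ∀ a b : Q, V.w a b ≤ W := by
      intro a b
      refine le_trans (Int.self_le_toNat _) ?_
      exact Nat.cast_le.mpr (Finset.le_sup
        (f := fun p : Q × Q => (V.w p.1 p.2).toNat) (Finset.mem_univ (a, b)))
    set B : ℤ := (Fintype.card Q : ℤ) * W with hB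
    -- a reachable configuration with a large counter value
    have hbig : ∃ c' : Q × ℕ, Reaches V (s, 0) c' ∧ Fintype.card Q * Wn < c'.2 := by
      by_contra hcon
      push_neg at hcon
      refine hU (Set.Finite.subset
        ((Set.finite_univ (α := Q)).prod (Set.finite_Iic (Fintype.card Q * Wn))) ?_)
      rintro ⟨q0, n0⟩ h
      exact ⟨trivial, hcon _ h⟩
    obtain ⟨⟨qe, n⟩, hre, hn⟩ := hbig
    obtain ⟨ρ0, hrun0, hh0, hl0, hw0⟩ := hre
    simp only [Nat.cast_zero, zero_add] at hw0
    -- minimal-length run whose total weight exceeds B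
    have hP : ∃ m, ∃ ρ : List Q,
        (RunAux V 0 ρ ∧ ρ.head? = some s ∧ B < pathWeight V ρ) ∧ ρ.length = m := by
      refine ⟨ρ0.length, ρ0, ⟨((isRun_iff V ρ0 0).mp hrun0).2, hh0, ?_⟩, rfl⟩
      rw [← hw0, hB, hWdef]
      exact_mod_cast hn
    obtain ⟨ρ, ⟨hρrun, hρh, hρw⟩, hρlen⟩ := Nat.find_spec hP
    have hρne : ρ ≠ [] := by intro h; rw [h] at hρh; simp at hρh
    -- in a minimal run, repeated states have strictly increasing counter values
    have hinc : ∀ i j, ∀ (hj : j < ρ.length) (hij : i < j),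
        ρ[i]'(by omega) = ρ[j]'hj →
        pathWeight V (ρ.take (i + 1)) < pathWeight V (ρ.take (j + 1)) := by
      intro i j hj hij heq
      by_contra hle
      push_neg at hle
      have hi : i < ρ.length := by omega
      have hti : (ρ.take (i + 1)).getLast? = some (ρ[j]'hj) := by
        rw [getLast?_take hi, heq]
      have hdj : (ρ.drop j).head? = some (ρ[j]'hj) := by
        rw [List.drop_eq_getElem_cons hj]; rfl
      have h1 : RunAux V 0 (ρ.take (i + 1)) := RunAux.take V ρ _ hρrun
      have h2 := RunAux.drop V j ρ hρrun
      have h3 : RunAux V ((0:ℤ) + pathWeight V (ρ.take (i + 1))) (ρ.drop j) :=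
        RunAux.mono V _ (by linarith) h2
      have h4 : RunAux V 0 (ρ.take (i + 1) ++ (ρ.drop j).tail) :=
        (runAux_append_tail_iff V _ 0 hti hdj).mpr ⟨h1, h3⟩
      have hsplit : pathWeight V ρ =
          pathWeight V (ρ.take (j + 1)) + pathWeight V (ρ.drop j) := by
        conv_lhs => rw [show ρ = ρ.take (j + 1) ++ (ρ.drop j).tail by
          rw [List.tail_drop, List.take_append_drop]]
        exact pathWeight_concat V _ (getLast?_take hj) hdj
      have hw' : pathWeight V (ρ.take (i + 1) ++ (ρ.drop j).tail) =
          pathWeight V (ρ.take (i + 1)) + pathWeight V (ρ.drop j) :=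
        pathWeight_concat V _ hti hdj
      have hlen' : (ρ.take (i + 1) ++ (ρ.drop j).tail).length < ρ.length := by
        rw [List.length_append, List.length_take, List.length_tail, List.length_drop]
        omega
      refine Nat.find_min hP (m := (ρ.take (i + 1) ++ (ρ.drop j).tail).length)
        (by omega) ⟨_, ⟨h4, ?_, ?_⟩, rfl⟩
      · rw [List.head?_append, head?_take, hρh]; rfl
      · rw [hw']; linarith
    -- the run is long
    have hlb := pathWeight_le V ρ hW0 hWb
    have hlen2 : Fintype.card Q + 2 ≤ ρ.length := by
      by_contra hc
      push_neg at hc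
      have h1 : ((ρ.length - 1 : ℕ) : ℤ) ≤ (Fintype.card Q : ℤ) := by
        have : ρ.length - 1 ≤ Fintype.card Q := by omega
        exact_mod_cast this
      have : pathWeight V ρ ≤ B := le_trans hlb
        (by rw [hB]; exact mul_le_mul_of_nonneg_right h1 hW0)
      linarith
    -- pigeonhole: a repeated state among the first card Q + 1 positions
    obtain ⟨k1, k2, hk12, hfeq⟩ := Fintype.exists_ne_map_eq_of_card_lt
      (fun k : Fin (Fintype.card Q + 1) => ρ[(k : ℕ)]'(by omega)) (by simp)
    have hPbe : ∃ b, b < ρ.length ∧ ∃ a, a < b ∧ ρ[a]? = ρ[b]? := by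
      rcases lt_or_gt_of_ne hk12 with h | h
      · have h' : (k1 : ℕ) < (k2 : ℕ) := h
        refine ⟨k2, by omega, k1, h', ?_⟩
        rw [List.getElem?_eq_getElem (by omega : (k1:ℕ) < ρ.length),
          List.getElem?_eq_getElem (by omega : (k2:ℕ) < ρ.length)]
        exact congrArg some hfeq
      · have h' : (k2 : ℕ) < (k1 : ℕ) := h
        refine ⟨k1, by omega, k2, h', ?_⟩
        rw [List.getElem?_eq_getElem (by omega : (k2:ℕ) < ρ.length),
          List.getElem?_eq_getElem (by omega : (k1:ℕ) < ρ.length)]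
        exact congrArg some hfeq.symm
    obtain ⟨hbl, a, hab, habe⟩ := Nat.find_spec hPbe
    set b := Nat.find hPbe with hbdef
    have hble : b ≤ Fintype.card Q := by
      rcases lt_or_gt_of_ne hk12 with h | h
      · have h' : (k1 : ℕ) < (k2 : ℕ) := h
        have := Nat.find_min' hPbe (m := (k2 : ℕ)) ⟨by omega, k1, h', by
          rw [List.getElem?_eq_getElem (by omega : (k1:ℕ) < ρ.length),
            List.getElem?_eq_getElem (by omega : (k2:ℕ) < ρ.length)]
          exact congrArg some hfeq⟩
        omega
      · have h' : (k2 : ℕ) < (k1 : ℕ) := h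
        have := Nat.find_min' hPbe (m := (k1 : ℕ)) ⟨by omega, k2, h', by
          rw [List.getElem?_eq_getElem (by omega : (k2:ℕ) < ρ.length),
            List.getElem?_eq_getElem (by omega : (k1:ℕ) < ρ.length)]
          exact congrArg some hfeq.symm⟩
        omega
    have hal : a < ρ.length := by omega
    have heqab : ρ[a]'hal = ρ[b]'hbl := by
      rw [List.getElem?_eq_getElem hal, List.getElem?_eq_getElem hbl] at habe
      exact Option.some.inj habe
    -- the first b states are pairwise distinct
    have hnodupb : (ρ.take b).Nodup := by
      refine List.pairwise_iff_getElem.mpr ?_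
      intro u v hu hv huv heq'
      have hu' : u < ρ.length := by rw [List.length_take] at hu; omega
      have hv' : v < ρ.length := by rw [List.length_take] at hv; omega
      have hvb : v < b := by rw [List.length_take] at hv; omega
      simp only [List.getElem_take] at heq'
      refine Nat.find_min hPbe hvb ⟨hv', u, huv, ?_⟩
      rw [List.getElem?_eq_getElem hu', List.getElem?_eq_getElem hv']
      exact congrArg some heq'
    -- assemble the lasso
    have hbl1 : b + 1 ≤ ρ.length := hbl
    set L := ρ.take (b + 1) with hL
    have hLlen : L.length = b + 1 := by rw [hL, List.length_take]; omega
    set π := ρ.take (a + 1) with hπ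
    set γ := L.drop a with hγ
    have hγlen : γ.length = b + 1 - a := by rw [hγ, List.length_drop, hLlen]
    have hπlen : π.length = a + 1 := by rw [hπ, List.length_take]; omega
    have hπL : π = L.take (a + 1) := by
      rw [hL, hπ, List.take_take]; congr 1; omega
    have hconcat : pathConcat π γ = L := by
      rw [pathConcat, hγ, List.tail_drop, hπL, List.take_append_drop]
    have hLrun : RunAux V 0 L := RunAux.take V ρ _ hρrun
    have hLne : L ≠ [] := by
      intro h; rw [h] at hLlen; simp at hLlen
    have hπne : π ≠ [] := by
      intro h; rw [h] at hπlen; simp at hπlen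
    have hπrun : RunAux V 0 π := RunAux.take V ρ _ hρrun
    have hπlast : π.getLast? = some (ρ[a]'hal) := getLast?_take hal
    have hLlast : L.getLast? = some (ρ[b]'hbl) := by
      rw [hL]; exact getLast?_take hbl
    have haL : a < L.length := by omega
    have hγhead : γ.head? = some (ρ[b]'hbl) := by
      rw [hγ, List.drop_eq_getElem_cons haL, List.head?_cons]
      simp only [hL, List.getElem_take, heqab]
    have hγlast : γ.getLast? = some (ρ[b]'hbl) := by
      rw [hγ, getLast?_drop haL, hLlast]
    have hγne : γ ≠ [] := by
      intro h; rw [h] at hγlen; simp at hγlen; omega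
    have hγrun : RunAux V ((0:ℤ) + pathWeight V (L.take (a + 1))) γ :=
      RunAux.drop V a L hLrun
    have hγpath : IsPath V γ := RunAux.isPath V γ hγne hγrun
    have hsplitw : pathWeight V L = pathWeight V π + pathWeight V γ := by
      rw [← hconcat, pathConcat]
      exact pathWeight_concat V π (by rw [hπlast, heqab]) hγhead
    have hπltL : pathWeight V π < pathWeight V L := by
      rw [hπ, hL]; exact hinc a b hbl hab heqab
    have hposγ : 0 < pathWeight V γ := by linarith
    have hπnodup : π.Nodup := by
      have e : π = (ρ.take b).take (a + 1) := by
        rw [hπ, List.take_take]; congr 1; omega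
      rw [e]
      exact List.Nodup.sublist (List.take_sublist _ _) hnodupb
    have hdl : γ.dropLast = (ρ.take b).drop a := by
      rw [List.dropLast_eq_take, hγlen, hγ, List.take_drop, hL, List.take_take]
      have e : (a + (b + 1 - a - 1)) ⊓ (b + 1) = b := by omega
      rw [e]
    have hγdln : γ.dropLast.Nodup := by
      rw [hdl]
      exact List.Nodup.sublist (List.drop_sublist _ _) hnodupb
    refine ⟨ρ[b]'hbl, π, γ, RunAux.isPath V π hπne hπrun, hπnodup, ?_, ?_,
      ⟨⟨hγpath, by omega, hγhead, hγlast⟩, hγdln⟩, hposγ, ?_, by omega, by omega⟩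
    · rw [hπ, head?_take]; exact hρh
    · rw [hπlast, heqab]
    · rw [hconcat]
      exact (isRun_iff V L 0).mpr ⟨hLne, hLrun⟩
  · rintro ⟨q, π, γc, hπpath, hnodup, hπh, hπl, ⟨hγc, hγnodup⟩, hpos, hrun, hl1, hl2⟩
    exact lasso_unbounded hπh hπl hγc hpos hrun

end VASSPaper
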